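/- Suppose a differentiable flow t ↦ ϕ_t(x) on [0,∞) with values in [0,∞) satisfies the differential inequality ∂_t ϕ_t(x) ≤ 2Aϕ_t(x) + R − Sϕ_t(x)² for all t ≥ 0. Then for every t ≥ 0 and all x, y ≥ 0, ϕ_t(x) ≤ φ_t(y) + exp(2∫₀^t (A − Sφ_s(y)) ds)·(x − y), where φ denotes the Riccati semigroup solving ∂_t φ_t(y) = 2Aφ_t(y) + R − Sφ_t(y)², φ_0(y) = y. -/

import Mathlib

set_option maxHeartbeats 1000000

noncomputable def lam (A R S : ℝ) : ℝ := 2 * Real.sqrt (A ^ 2 + R * S)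

noncomputable def wplus (A R S : ℝ) : ℝ := (A + lam A R S / 2) / S

noncomputable def wminus (A R S : ℝ) : ℝ := (A - lam A R S / 2) / S

/-- The closed-form Riccati semigroup `φ_t(x)`. -/
noncomputable def phi (A R S t x : ℝ) : ℝ :=
  wplus A R S +
    (x - wplus A R S) * ((wplus A R S - wminus A R S) * Real.exp (-(lam A R S) * t)) /
      ((wplus A R S - wminus A R S) * Real.exp (-(lam A R S) * t) +
        (x - wminus A R S) * (1 - Real.exp (-(lam A R S) * t)))

/-- `ϖ = 1 - ϖ₊/ϖ₋`. -/
noncomputable def vpi (A R S : ℝ) : ℝ := 1 - wplus A R S / wminus A R S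

lemma riccati_hasDerivAt (A R S lm wp a b Dd : ℝ)
    (hroot : S * wp ^ 2 = 2 * A * wp + R)
    (h2 : 2 * S * wp = 2 * A + lm) (hSD : S * Dd = lm)
    (t : ℝ) (hden : b * Real.exp (lm * t) - a ≠ 0) :
    HasDerivAt (fun s => wp + a * Dd / (b * Real.exp (lm * s) - a))
      (2 * A * (wp + a * Dd / (b * Real.exp (lm * t) - a)) + R
        - S * (wp + a * Dd / (b * Real.exp (lm * t) - a)) ^ 2) t := by
  have hden' : HasDerivAt (fun s => b * Real.exp (lm * s) - a)
      (b * (Real.exp (lm * t) * lm)) t := by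
    have h1 : HasDerivAt (fun s : ℝ => lm * s) lm t := by
      simpa using (hasDerivAt_id t).const_mul lm
    exact ((h1.exp).const_mul b).sub_const a
  have hq := ((hasDerivAt_const t (a * Dd)).div hden' hden).const_add wp
  refine HasDerivAt.congr_deriv hq ?_
  symm
  set E := Real.exp (lm * t) with hE
  set d := b * E - a with hd
  clear_value d
  have hbe : b * (E * lm) = (d + a) * lm := by rw [hd]; ring
  rw [hbe]
  have hdne : d ≠ 0 := hden
  field_simp
  linear_combination (-(d^2)) * hroot + (-(a*Dd*d)) * h2 + (-(a^2*Dd)) * hSD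

/-- Rewriting `phi` with a denominator that is positive on `[0, ∞)`. -/
lemma phi_eq_aux (A R S y t : ℝ) :
    phi A R S t y = wplus A R S + (y - wplus A R S) * (wplus A R S - wminus A R S) /
      ((y - wminus A R S) * Real.exp (lam A R S * t) - (y - wplus A R S)) := by
  unfold phi
  set lm := lam A R S
  set wp := wplus A R S
  set wm := wminus A R S
  set E := Real.exp (-lm * t) with hEdef
  set e := Real.exp (lm * t) with hedef
  have hEe : E * e = 1 := by
    rw [hEdef, hedef, ← Real.exp_add]
    norm_num
  have h1 : (wp - wm) * E + (y - wm) * (1 - E) = (y - wm) - (y - wp) * E := by ring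
  rw [h1]
  have hden2 : (y - wm) * e - (y - wp) = e * ((y - wm) - (y - wp) * E) := by
    linear_combination (y - wp) * hEe
  rw [hden2]
  congr 1
  rcases eq_or_ne ((y - wm) - (y - wp) * E) 0 with h | h
  · rw [h, mul_zero, div_zero, div_zero]
  · rw [div_eq_div_iff h (mul_ne_zero (Real.exp_ne_zero _) h)]
    linear_combination ((y - wp) * (wp - wm) * ((y - wm) - (y - wp) * E)) * hEe

theorem riccati_comparison_lemma (A R S : ℝ) (hR : 0 < R) (hS : 0 < S)
    (f : ℝ → ℝ) (x y : ℝ) (hx : 0 ≤ x) (hy : 0 ≤ y)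
    (hf0 : f 0 = x)
    (hfpos : ∀ t : ℝ, 0 ≤ t → 0 ≤ f t)
    (hfdiff : ∀ t : ℝ, 0 ≤ t → DifferentiableAt ℝ f t)
    (hfineq : ∀ t : ℝ, 0 ≤ t → deriv f t ≤ 2 * A * f t + R - S * (f t) ^ 2) :
    ∀ t : ℝ, 0 ≤ t →
      f t ≤ phi A R S t y +
        Real.exp (2 * ∫ s in (0 : ℝ)..t, (A - S * phi A R S s y)) * (x - y) := by
  have hARS : (0:ℝ) < A ^ 2 + R * S := by positivity
  set lm := lam A R S with hlm_def
  set wp := wplus A R S with hwp_def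
  set wm := wminus A R S with hwm_def
  have hlm : 0 < lm := by
    rw [hlm_def]; unfold lam
    positivity
  have hlmsq : lm ^ 2 = 4 * (A ^ 2 + R * S) := by
    rw [hlm_def]; unfold lam
    rw [mul_pow, Real.sq_sqrt hARS.le]; ring
  have hroot : S * wp ^ 2 = 2 * A * wp + R := by
    rw [hwp_def]; unfold wplus
    rw [← hlm_def]
    field_simp
    linear_combination hlmsq
  have h2 : 2 * S * wp = 2 * A + lm := by
    rw [hwp_def]; unfold wplus
    rw [← hlm_def]
    field_simp
  set Dd := wp - wm with hDd_def
  have hSD : S * Dd = lm := by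
    rw [hDd_def, hwp_def, hwm_def]; unfold wplus wminus
    rw [← hlm_def]
    field_simp
    ring
  have hDpos : 0 < Dd := by nlinarith
  have hwm_neg : wm < 0 := by
    have hwm_lt : S * wm = A - lm / 2 := by
      rw [hwm_def]; unfold wminus
      rw [← hlm_def]; field_simp
    have hAlm : A < lm / 2 := by
      have h4 : A ^ 2 < (lm / 2) ^ 2 := by nlinarith
      have hl2 : 0 < lm / 2 := by linarith
      nlinarith [abs_nonneg A, sq_abs A, le_abs_self A]
    nlinarith
  set a := y - wp with ha_def
  set b := y - wm with hb_def
  have hb : b = a + Dd := by rw [hb_def, ha_def, hDd_def]; ring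
  have hbpos : 0 < b := by rw [hb_def]; linarith
  -- the comparison solution
  set g : ℝ → ℝ := fun s => wp + a * Dd / (b * Real.exp (lm * s) - a) with hg_def
  have hphig : ∀ s : ℝ, phi A R S s y = g s := fun s => phi_eq_aux A R S y s
  have hden : ∀ s : ℝ, 0 ≤ s → 0 < b * Real.exp (lm * s) - a := by
    intro s hs
    have h1 : (1:ℝ) ≤ Real.exp (lm * s) := by
      rw [← Real.exp_zero]
      exact Real.exp_le_exp.2 (by positivity)
    nlinarith
  have hg0 : g 0 = y := by
    show wp + a * Dd / (b * Real.exp (lm * 0) - a) = y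
    rw [mul_zero, Real.exp_zero, mul_one]
    have hba : b - a = Dd := by rw [hb]; ring
    rw [hba, mul_div_assoc, div_self hDpos.ne', mul_one, ha_def]
    ring
  have hgderiv : ∀ s : ℝ, b * Real.exp (lm * s) - a ≠ 0 →
      HasDerivAt g (2 * A * g s + R - S * (g s) ^ 2) s := fun s hs =>
    riccati_hasDerivAt A R S lm wp a b Dd hroot h2 hSD s hs
  -- the open set where the denominator does not vanish
  set U : Set ℝ := {u : ℝ | b * Real.exp (lm * u) - a ≠ 0} with hU_def
  have hUopen : IsOpen U := by
    have : Continuous fun u : ℝ => b * Real.exp (lm * u) - a :=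
      ((continuous_const.mul (Real.continuous_exp.comp (continuous_const.mul continuous_id))).sub
        continuous_const)
    exact isOpen_ne_fun this continuous_const
  have hIciU : Set.Ici (0:ℝ) ⊆ U := fun s hs => (hden s hs).ne'
  have hgcontU : ∀ u ∈ U, ContinuousAt g u := fun u hu =>
    (hgderiv u hu).continuousAt
  -- main argument
  intro t ht
  -- rewrite phi as g in the goal
  have hintg_eq : (fun s => A - S * phi A R S s y) = fun s => A - S * g s := by
    funext s; rw [hphig]
  rw [hphig, hintg_eq]
  rcases ht.eq_or_lt with rfl | htpos
  · simp [intervalIntegral.integral_same, hg0, hf0]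
  -- t > 0
  set F : ℝ → ℝ := fun s => A - S * g s with hF_def
  have hFcontU : ∀ u ∈ U, ContinuousAt F u := fun u hu =>
    continuousAt_const.sub (continuousAt_const.mul (hgcontU u hu))
  have hFcont : ContinuousOn F (Set.Icc 0 t) := fun s hs =>
    (hFcontU s (hIciU hs.1)).continuousWithinAt
  have hFint : ∀ s ∈ Set.Icc (0:ℝ) t, IntervalIntegrable F MeasureTheory.volume 0 s := by
    intro s hs
    apply ContinuousOn.intervalIntegrable
    have : Set.uIcc (0:ℝ) s = Set.Icc 0 s := Set.uIcc_of_le hs.1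
    rw [this]
    exact hFcont.mono (Set.Icc_subset_Icc le_rfl hs.2)
  set I : ℝ → ℝ := fun s => ∫ u in (0:ℝ)..s, F u with hI_def
  have hIderiv : ∀ s ∈ Set.Ioo (0:ℝ) t, HasDerivAt I (F s) s := by
    intro s hs
    exact intervalIntegral.integral_hasDerivAt_right
      (hFint s ⟨hs.1.le, hs.2.le⟩)
      (ContinuousAt.stronglyMeasurableAtFilter hUopen hFcontU s (hIciU hs.1.le))
      (hFcontU s (hIciU hs.1.le))
  have hIcont : ContinuousOn I (Set.Icc 0 t) := by
    have h1 : Set.uIcc (0:ℝ) t = Set.Icc 0 t := Set.uIcc_of_le ht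
    have := intervalIntegral.continuousOn_primitive_interval
      (f := F) (μ := MeasureTheory.volume) (a := 0) (b := t)
      (by rw [h1]; exact (hFcont.mono (by simp)).integrableOn_compact isCompact_Icc)
    rwa [h1] at this
  set u : ℝ → ℝ := fun s => (f s - g s) * Real.exp (-(2 * I s)) with hu_def
  have hucont : ContinuousOn u (Set.Icc 0 t) := by
    apply ContinuousOn.mul
    · exact ContinuousOn.sub
        (fun s hs => ((hfdiff s hs.1).continuousAt).continuousWithinAt)
        (fun s hs => (hgcontU s (hIciU hs.1)).continuousWithinAt)
    · exact Real.continuous_exp.comp_continuousOn ((continuousOn_const.mul hIcont).neg)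
  have huderiv : ∀ s ∈ Set.Ioo (0:ℝ) t,
      HasDerivAt u ((deriv f s - (2 * A * g s + R - S * (g s) ^ 2)) * Real.exp (-(2 * I s))
        + (f s - g s) * (Real.exp (-(2 * I s)) * (-(2 * F s)))) s := by
    intro s hs
    have hfd : HasDerivAt f (deriv f s) s := (hfdiff s hs.1.le).hasDerivAt
    have hgd := hgderiv s (hden s hs.1.le).ne'
    have hId := hIderiv s hs
    have hE : HasDerivAt (fun s => Real.exp (-(2 * I s)))
        (Real.exp (-(2 * I s)) * (-(2 * F s))) s := by
      have := ((hId.const_mul (2:ℝ)).neg).exp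
      simpa [mul_comm] using this
    exact (hfd.sub hgd).mul hE
  have huderiv_nonpos : ∀ s ∈ Set.Ioo (0:ℝ) t, deriv u s ≤ 0 := by
    intro s hs
    rw [(huderiv s hs).deriv]
    have hfi := hfineq s hs.1.le
    have hEpos : 0 < Real.exp (-(2 * I s)) := Real.exp_pos _
    rw [show F s = A - S * g s from rfl]
    have key : deriv f s - (2 * A * g s + R - S * (g s) ^ 2)
        - 2 * (A - S * g s) * (f s - g s) ≤ - S * (f s - g s) ^ 2 := by
      nlinarith [hfi]
    nlinarith [mul_le_mul_of_nonneg_right key hEpos.le,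
      mul_nonneg (mul_nonneg hS.le (sq_nonneg (f s - g s))) hEpos.le]
  have hanti : AntitoneOn u (Set.Icc 0 t) := by
    apply antitoneOn_of_deriv_nonpos (convex_Icc 0 t) hucont
    · intro s hs
      rw [interior_Icc] at hs
      exact (huderiv s hs).differentiableAt.differentiableWithinAt
    · intro s hs
      rw [interior_Icc] at hs
      exact huderiv_nonpos s hs
  have hut : u t ≤ u 0 :=
    hanti (Set.left_mem_Icc.2 ht) (Set.right_mem_Icc.2 ht) ht
  have hu0 : u 0 = x - y := by
    rw [hu_def]
    simp only [hI_def, intervalIntegral.integral_same, mul_zero, neg_zero, Real.exp_zero,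
      mul_one, hf0, hg0]
  rw [hu0] at hut
  -- conclude
  have hexp : Real.exp (-(2 * I t)) * Real.exp (2 * I t) = 1 := by
    rw [← Real.exp_add]; simp
  have hEpos : 0 < Real.exp (2 * I t) := Real.exp_pos _
  have := mul_le_mul_of_nonneg_right hut hEpos.le
  rw [hu_def] at this
  simp only at this
  rw [mul_assoc, hexp, mul_one] at this
  have hIt : (∫ s in (0:ℝ)..t, (A - S * g s)) = I t := rfl
  rw [hIt, mul_comm (Real.exp (2 * I t)) (x - y)]
  linarith [this]
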